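/- arXiv:1009.5339 — 2 statements merged into one kernel-verified Lean document; each statement's English description precedes it below -/
import Mathlib

section
/- Let F be any field. Every 3-dimensional nilpotent non-unital associative F-algebra is isomorphic to one of the following algebras, given by basis a, b, c and the listed nonzero products: A_{3,1} (all products zero); A_{3,2}: a² = b; A_{3,3}^α: a² = αc, b² = c, with α ∈ F, α ≠ 0; A_{3,4}^α: a² = αc, ab = c, b² = c, with α ∈ F; A_{3,5}: ab = c, ba = −c; A_{3,6}: a² = b, ab = ba = c. -/
/-- A (non-unital) algebra is nilpotent if there is `n ≥ 1` such that every product of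
`n` elements is zero. -/
def AlgNilpotent (A : Type*) [Mul A] [Zero A] : Prop :=
  ∃ n : ℕ, 0 < n ∧ ∀ (x : A) (l : List A), l.length + 1 = n → l.foldl (· * ·) x = 0

section Tables

variable {F A : Type*} [Field F] [NonUnitalRing A] [Module F A]

/-- `A_{3,2}` : `a² = b`, all other products of basis elements zero. -/
def IsA32Basis (v : Module.Basis (Fin 3) F A) : Prop :=
  v 0 * v 0 = v 1 ∧
  v 0 * v 1 = 0 ∧ v 1 * v 0 = 0 ∧ v 0 * v 2 = 0 ∧ v 2 * v 0 = 0 ∧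
  v 1 * v 1 = 0 ∧ v 1 * v 2 = 0 ∧ v 2 * v 1 = 0 ∧ v 2 * v 2 = 0

/-- `A_{3,3}^α` : `a² = αc`, `b² = c`, all other products of basis elements zero. -/
def IsA33Basis (α : F) (v : Module.Basis (Fin 3) F A) : Prop :=
  v 0 * v 0 = α • v 2 ∧ v 1 * v 1 = v 2 ∧
  v 0 * v 1 = 0 ∧ v 1 * v 0 = 0 ∧ v 0 * v 2 = 0 ∧ v 2 * v 0 = 0 ∧
  v 1 * v 2 = 0 ∧ v 2 * v 1 = 0 ∧ v 2 * v 2 = 0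

/-- `A_{3,4}^α` : `a² = αc`, `ab = c`, `b² = c`, all other products zero. -/
def IsA34Basis (α : F) (v : Module.Basis (Fin 3) F A) : Prop :=
  v 0 * v 0 = α • v 2 ∧ v 0 * v 1 = v 2 ∧ v 1 * v 1 = v 2 ∧
  v 1 * v 0 = 0 ∧ v 0 * v 2 = 0 ∧ v 2 * v 0 = 0 ∧
  v 1 * v 2 = 0 ∧ v 2 * v 1 = 0 ∧ v 2 * v 2 = 0

/-- `A_{3,5}` : `ab = c`, `ba = -c`, all other products zero. -/
def IsA35Basis (v : Module.Basis (Fin 3) F A) : Prop :=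
  v 0 * v 1 = v 2 ∧ v 1 * v 0 = -v 2 ∧
  v 0 * v 0 = 0 ∧ v 1 * v 1 = 0 ∧ v 0 * v 2 = 0 ∧ v 2 * v 0 = 0 ∧
  v 1 * v 2 = 0 ∧ v 2 * v 1 = 0 ∧ v 2 * v 2 = 0

/-- `A_{3,6}` : `a² = b`, `ab = ba = c`, all other products zero. -/
def IsA36Basis (v : Module.Basis (Fin 3) F A) : Prop :=
  v 0 * v 0 = v 1 ∧ v 0 * v 1 = v 2 ∧ v 1 * v 0 = v 2 ∧
  v 0 * v 2 = 0 ∧ v 2 * v 0 = 0 ∧ v 1 * v 1 = 0 ∧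
  v 1 * v 2 = 0 ∧ v 2 * v 1 = 0 ∧ v 2 * v 2 = 0

end Tables

section Aux
set_option linter.unusedSectionVars false
variable {F A : Type*} [Field F] [NonUnitalRing A] [Module F A]
  [SMulCommClass F A A] [IsScalarTower F A A]

lemma mul_foldl_mul (l : List A) (x y : A) :
    x * l.foldl (· * ·) y = l.foldl (· * ·) (x * y) := by
  induction l generalizing y with
  | nil => rfl
  | cons a l ih => simpa [mul_assoc] using ih (y * a)

/-- span of products of `k` elements -/
def Sp (F : Type*) {A : Type*} [Field F] [NonUnitalRing A] [Module F A] (k : ℕ) :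
    Submodule F A :=
  Submodule.span F {z | ∃ (x : A) (l : List A), l.length + 1 = k ∧ z = l.foldl (· * ·) x}

lemma sp_one : Sp F (A := A) 1 = ⊤ := by
  rw [Sp, Submodule.eq_top_iff']
  intro x
  exact Submodule.subset_span ⟨x, [], rfl, rfl⟩

lemma mem_sp_one (x : A) : x ∈ Sp F 1 := by rw [sp_one]; trivial

lemma mul_mem_sp {j k : ℕ} {x y : A} (hx : x ∈ Sp F j) (hy : y ∈ Sp F k) :
    x * y ∈ Sp F (j + k) := by
  induction hy using Submodule.span_induction with
  | mem z hz =>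
    induction hx using Submodule.span_induction with
    | mem w hw =>
      obtain ⟨x0, l, hl, rfl⟩ := hw
      obtain ⟨y0, m, hm, rfl⟩ := hz
      refine Submodule.subset_span ⟨x0, l ++ y0 :: m, ?_, ?_⟩
      · simp only [List.length_append, List.length_cons]; omega
      · rw [mul_foldl_mul, List.foldl_append]
        rfl
    | zero => simp
    | add a b _ _ h1 h2 => rw [add_mul]; exact add_mem h1 h2
    | smul c a _ h => rw [smul_mul_assoc]; exact Submodule.smul_mem _ _ h
  | zero => simp
  | add a b _ _ h1 h2 => rw [mul_add]; exact add_mem h1 h2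
  | smul c a _ h => rw [mul_smul_comm]; exact Submodule.smul_mem _ _ h

lemma mem_sp_two (x y : A) : x * y ∈ Sp F 2 :=
  Submodule.subset_span ⟨x, [y], rfl, rfl⟩

lemma mem_sp_three (x y z : A) : (x * y) * z ∈ Sp F 3 :=
  Submodule.subset_span ⟨x, [y, z], rfl, rfl⟩

lemma mem_sp_four (w x y z : A) : ((w * x) * y) * z ∈ Sp F 4 :=
  Submodule.subset_span ⟨w, [x, y, z], rfl, rfl⟩

lemma sp_succ_le (k : ℕ) : Sp F (A := A) (k + 2) ≤ Sp F (k + 1) := by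
  rw [Sp, Submodule.span_le]
  rintro z ⟨x, l, hl, rfl⟩
  match l, hl with
  | a :: l, hl =>
    exact Submodule.subset_span ⟨x * a, l, by simpa using hl, rfl⟩

lemma sp_le_sp {j k : ℕ} (h : j ≤ k) (hj : j ≠ 0) : Sp F (A := A) k ≤ Sp F j := by
  induction k with
  | zero => omega
  | succ k ih =>
    rcases Nat.eq_or_lt_of_le h with rfl | h
    · exact le_rfl
    · have h1 : k ≠ 0 := by omega
      obtain ⟨k, rfl⟩ := Nat.exists_eq_succ_of_ne_zero h1
      exact (sp_succ_le k).trans (ih (by omega))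

lemma sp_mono_succ {k : ℕ} (hk : k ≠ 0) (h : Sp F (A := A) k ≤ Sp F (k + 1)) :
    Sp F (A := A) (k + 1) ≤ Sp F (k + 2) := by
  rw [show Sp F (A := A) (k+1) = _ from rfl, Sp, Submodule.span_le]
  rintro z ⟨x, l, hl, rfl⟩
  rcases List.eq_nil_or_concat l with rfl | ⟨L, y, rfl⟩
  · simp at hl; omega
  · rw [List.concat_eq_append, List.foldl_append]
    have h1 : L.foldl (· * ·) x ∈ Sp F (k + 1) :=
      h (Submodule.subset_span ⟨x, L, by simp at hl ⊢; omega, rfl⟩)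
    have h2 : y ∈ Sp F 1 := mem_sp_one y
    simpa using mul_mem_sp h1 h2

lemma sp_eventually_bot {n : ℕ} (hn : 0 < n)
    (hnil : ∀ (x : A) (l : List A), l.length + 1 = n → l.foldl (· * ·) x = 0) :
    ∀ m, n ≤ m → Sp F (A := A) m = ⊥ := by
  have h0 : Sp F (A := A) n = ⊥ := by
    rw [eq_bot_iff, Sp, Submodule.span_le]
    rintro z ⟨x, l, hl, rfl⟩
    simp [hnil x l hl]
  intro m hm
  refine le_antisymm ?_ bot_le
  rw [← h0]
  exact sp_le_sp hm (by omega)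

lemma sp_stab {k : ℕ} (hk : k ≠ 0) (h : Sp F (A := A) (k + 1) = Sp F k)
    (hnil : AlgNilpotent A) : Sp F (A := A) k = ⊥ := by
  obtain ⟨n, hn, hnl⟩ := hnil
  have grow : ∀ j, Sp F (A := A) k ≤ Sp F (k + j) := by
    intro j
    induction j with
    | zero => exact le_rfl
    | succ j ih =>
      rcases Nat.eq_zero_or_pos j with rfl | hj
      · exact h.ge
      · have haux : ∀ i, Sp F (A := A) (k + i) ≤ Sp F (k + i + 1) := by
          intro i
          induction i with
          | zero => exact h.ge
          | succ i ih2 => exact sp_mono_succ (k := k + i) (by omega) ih2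
        exact ih.trans (haux j)
  have hb := grow n
  rw [sp_eventually_bot hn hnl (k + n) (by omega)] at hb
  exact le_antisymm hb bot_le

end Aux

/-- Every 3-dimensional nilpotent non-unital associative algebra over a field `F` is
isomorphic to one of `A_{3,1}` (zero multiplication), `A_{3,2}`, `A_{3,3}^α` (`α ≠ 0`),
`A_{3,4}^α`, `A_{3,5}`, `A_{3,6}`. -/
theorem stmt11 {F A : Type*} [Field F]
    [NonUnitalRing A] [Module F A] [SMulCommClass F A A] [IsScalarTower F A A]
    (h3 : Module.finrank F A = 3) (hnil : AlgNilpotent A) :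
    ∃ v : Module.Basis (Fin 3) F A,
      (∀ x y : A, x * y = 0) ∨
      IsA32Basis v ∨
      (∃ α : F, α ≠ 0 ∧ IsA33Basis α v) ∨
      (∃ α : F, IsA34Basis α v) ∨
      IsA35Basis v ∨
      IsA36Basis v := by
  classical
  have hFD : FiniteDimensional F A := FiniteDimensional.of_finrank_eq_succ h3
  have hTriv : Nontrivial A := Module.nontrivial_of_finrank_pos (R := F) (by omega)
  -- the descending chain of power spans
  have hne2 : Sp F (A := A) 2 ≠ ⊤ := by
    intro h
    have h1 : Sp F (A := A) 1 = ⊥ := sp_stab one_ne_zero (by rw [h, sp_one]) hnil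
    rw [sp_one] at h1
    exact absurd h1 top_ne_bot
  have d2 : Module.finrank F (Sp F (A := A) 2) ≤ 2 := by
    have := Submodule.finrank_lt (K := F) (V := A) hne2
    omega
  have step : ∀ k : ℕ, k ≠ 0 → Sp F (A := A) (k + 1) = ⊥ ∨
      Module.finrank F (Sp F (A := A) (k + 1)) < Module.finrank F (Sp F (A := A) k) := by
    intro k hk
    rcases lt_or_eq_of_le (show Sp F (A := A) (k + 1) ≤ Sp F k by
      obtain ⟨k, rfl⟩ := Nat.exists_eq_succ_of_ne_zero hk
      exact sp_succ_le k) with h | h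
    · exact Or.inr (Submodule.finrank_lt_finrank_of_lt h)
    · left
      rw [eq_bot_iff, ← sp_stab hk h hnil]
      obtain ⟨k, rfl⟩ := Nat.exists_eq_succ_of_ne_zero hk
      exact sp_succ_le k
  have d3 : Module.finrank F (Sp F (A := A) 3) ≤ 1 := by
    rcases step 2 (by norm_num) with h | h
    · rw [show Sp F (A := A) 3 = Sp F (A := A) (2+1) from rfl, h]; simp
    · have h' : Module.finrank F (Sp F (A := A) 3) < Module.finrank F (Sp F (A := A) 2) := h
      omega
  have hSp4 : Sp F (A := A) 4 = ⊥ := by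
    rcases step 3 (by norm_num) with h | h
    · exact h
    · have h' : Module.finrank F (Sp F (A := A) 4) < Module.finrank F (Sp F (A := A) 3) := h
      have : Module.finrank F (Sp F (A := A) 4) = 0 := by omega
      exact Submodule.finrank_eq_zero.mp this
  have q4 : ∀ w x y z : A, ((w * x) * y) * z = 0 := by
    intro w x y z
    have := mem_sp_four (F := F) w x y z
    rw [hSp4, Submodule.mem_bot] at this
    exact this
  -- case on the dimension of A² = Sp 2
  have hd : Module.finrank F (Sp F (A := A) 2) = 0 ∨
      Module.finrank F (Sp F (A := A) 2) = 1 ∨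
      Module.finrank F (Sp F (A := A) 2) = 2 := by omega
  rcases hd with hd | hd | hd
  · -- zero multiplication
    refine ⟨Module.finBasisOfFinrankEq F A h3, Or.inl ?_⟩
    intro x y
    have h := mem_sp_two (F := F) x y
    rw [Submodule.finrank_eq_zero.mp hd, Submodule.mem_bot] at h
    exact h
  · -- dim A² = 1
    have hW0 : Sp F (A := A) 2 ≠ ⊥ := by
      intro h; rw [h] at hd; simp at hd
    obtain ⟨c, hcW, hc0⟩ := Submodule.exists_mem_ne_zero_of_ne_bot hW0
    have hWspan : Sp F (A := A) 2 = Submodule.span F {c} := by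
      refine (Submodule.eq_of_le_of_finrank_le ?_ ?_).symm
      · rw [Submodule.span_le, Set.singleton_subset_iff]; exact hcW
      · rw [finrank_span_singleton hc0, hd]
    have hS3 : Sp F (A := A) 3 = ⊥ := by
      rcases step 2 (by norm_num) with h | h
      · exact h
      · have h' : Module.finrank F (Sp F (A := A) 3) < Module.finrank F (Sp F (A := A) 2) := h
        have h0 : Module.finrank F (Sp F (A := A) 3) = 0 := by omega
        exact Submodule.finrank_eq_zero.mp h0
    have q3 : ∀ x y z : A, (x * y) * z = 0 := by
      intro x y z
      have := mem_sp_three (F := F) x y z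
      rw [hS3, Submodule.mem_bot] at this
      exact this
    have annL : ∀ x : A, x * c = 0 := by
      intro x
      have := mul_mem_sp (mem_sp_one (F := F) x) hcW
      rw [show (1 + 2 : ℕ) = 3 from rfl, hS3, Submodule.mem_bot] at this
      exact this
    have annR : ∀ x : A, c * x = 0 := by
      intro x
      have := mul_mem_sp hcW (mem_sp_one (F := F) x)
      rw [show (2 + 1 : ℕ) = 3 from rfl, hS3, Submodule.mem_bot] at this
      exact this
    have rep : ∀ z ∈ Sp F (A := A) 2, ∃ r : F, z = r • c := by
      intro z hz
      rw [hWspan, Submodule.mem_span_singleton] at hz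
      obtain ⟨r, hr⟩ := hz
      exact ⟨r, hr.symm⟩
    by_cases hsq : ∀ x : A, x * x = 0
    · -- alternating: A_{3,5}
      have anti : ∀ x y : A, y * x = -(x * y) := by
        intro x y
        have h := hsq (x + y)
        rw [add_mul, mul_add, mul_add, hsq x, hsq y, zero_add, add_zero, add_comm] at h
        exact eq_neg_of_add_eq_zero_left h
      obtain ⟨p, q, hpq⟩ : ∃ p q : A, p * q ≠ 0 := by
        by_contra h
        push_neg at h
        apply hW0
        rw [eq_bot_iff, show Sp F (A := A) 2 = _ from rfl, Sp, Submodule.span_le]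
        rintro z ⟨x, l, hl, rfl⟩
        obtain ⟨y, rfl⟩ := List.length_eq_one_iff.mp (by omega : l.length = 1)
        simp [h x y]
      obtain ⟨γ, hγ⟩ := rep _ (mem_sp_two p q)
      have hγ0 : γ ≠ 0 := by rintro rfl; rw [zero_smul] at hγ; exact hpq hγ
      obtain ⟨b', hab, hba, hbb⟩ : ∃ b' : A, p * b' = c ∧ b' * p = -c ∧ b' * b' = 0 := by
        refine ⟨γ⁻¹ • q, ?_, ?_, hsq _⟩
        · rw [mul_smul_comm, hγ, smul_smul, inv_mul_cancel₀ hγ0, one_smul]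
        · rw [anti p (γ⁻¹ • q), mul_smul_comm, hγ, smul_smul, inv_mul_cancel₀ hγ0, one_smul]
      have hpp : p * p = 0 := hsq p
      have hli : LinearIndependent F ![p, b', c] := by
        rw [Fintype.linearIndependent_iff]
        intro g hg
        rw [Fin.sum_univ_three] at hg
        simp only [Matrix.cons_val_zero, Matrix.cons_val_one, Matrix.head_cons,
          Matrix.cons_val_two, Matrix.tail_cons] at hg
        have h0 : g 0 = 0 := by
          have e1 : (g 0 • p + g 1 • b' + g 2 • c) * b' = 0 := by rw [hg, zero_mul]
          rw [add_mul, add_mul, smul_mul_assoc, smul_mul_assoc, smul_mul_assoc,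
            hab, hbb, annR, smul_zero, smul_zero, add_zero, add_zero] at e1
          exact (smul_eq_zero.mp e1).resolve_right hc0
        have h1 : g 1 = 0 := by
          have e2 : p * (g 0 • p + g 1 • b' + g 2 • c) = 0 := by rw [hg, mul_zero]
          rw [mul_add, mul_add, mul_smul_comm, mul_smul_comm, mul_smul_comm,
            hpp, hab, annL, smul_zero, smul_zero, zero_add, add_zero] at e2
          exact (smul_eq_zero.mp e2).resolve_right hc0
        have h2 : g 2 = 0 := by
          rw [h0, h1, zero_smul, zero_smul, zero_add, zero_add] at hg
          exact (smul_eq_zero.mp hg).resolve_right hc0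
        intro i; fin_cases i <;> assumption
      have hcard : Fintype.card (Fin 3) = Module.finrank F A := by simp [h3]
      refine ⟨basisOfLinearIndependentOfCardEqFinrank hli hcard,
        Or.inr <| Or.inr <| Or.inr <| Or.inr <| Or.inl ?_⟩
      have hv : ⇑(basisOfLinearIndependentOfCardEqFinrank hli hcard) = ![p, b', c] :=
        coe_basisOfLinearIndependentOfCardEqFinrank hli hcard
      unfold IsA35Basis
      rw [hv]
      simp only [Matrix.cons_val_zero, Matrix.cons_val_one, Matrix.head_cons,
        Matrix.cons_val_two, Matrix.tail_cons]
      exact ⟨hab, hba, hpp, hbb, annL p, annR p, annL b', annR b', annL c⟩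
    · push_neg at hsq
      obtain ⟨b, hbb0⟩ := hsq
      obtain ⟨δ, hδ⟩ := rep _ (mem_sp_two b b)
      have hδ0 : δ ≠ 0 := by rintro rfl; rw [zero_smul] at hδ; exact hbb0 hδ
      set c' := δ • c with hc'
      have hc'0 : c' ≠ 0 := smul_ne_zero hδ0 hc0
      have hbb : b * b = c' := hδ
      have hb0 : b ≠ 0 := by rintro rfl; rw [zero_mul] at hbb0; exact hbb0 rfl
      have annL' : ∀ x : A, x * c' = 0 := fun x => by
        rw [hc', mul_smul_comm, annL, smul_zero]
      have annR' : ∀ x : A, c' * x = 0 := fun x => by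
        rw [hc', smul_mul_assoc, annR, smul_zero]
      have rep' : ∀ z ∈ Sp F (A := A) 2, ∃ r : F, z = r • c' := by
        intro z hz
        obtain ⟨r, hr⟩ := rep z hz
        refine ⟨r * δ⁻¹, ?_⟩
        rw [hc', smul_smul, mul_assoc, inv_mul_cancel₀ hδ0, mul_one]
        exact hr
      set L := LinearMap.mulLeft F b with hL
      have hrange : LinearMap.range L ≤ Sp F (A := A) 2 := by
        rintro x ⟨y, rfl⟩
        exact mem_sp_two b y
      have hrk : Module.finrank F (LinearMap.range L) ≤ 1 := by
        have := Submodule.finrank_mono hrange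
        omega
      have hker : 2 ≤ Module.finrank F (LinearMap.ker L) := by
        have := LinearMap.finrank_range_add_finrank_ker L
        rw [h3] at this
        omega
      set U := Submodule.span F ({b, c'} : Set A) with hU
      have hUrk : Module.finrank F U ≤ 2 := by
        rw [hU, Submodule.span_insert]
        have h5 := Submodule.finrank_sup_add_finrank_inf_eq (Submodule.span F {b})
          (Submodule.span F {c'})
        rw [finrank_span_singleton hb0, finrank_span_singleton hc'0] at h5
        omega
      obtain ⟨a, haK, haU⟩ : ∃ a, a ∈ LinearMap.ker L ∧ a ∉ U := by
        by_contra h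
        push_neg at h
        have heq : LinearMap.ker L = U :=
          Submodule.eq_of_le_of_finrank_le (fun x hx => h x hx) (by omega)
        have hbU : b ∈ U := Submodule.subset_span (by simp)
        rw [← heq, LinearMap.mem_ker, hL, LinearMap.mulLeft_apply] at hbU
        exact hbb0 hbU
      have hba : b * a = 0 := by
        rwa [LinearMap.mem_ker, hL, LinearMap.mulLeft_apply] at haK
      obtain ⟨α, hα⟩ := rep' _ (mem_sp_two a a)
      obtain ⟨γ, hγ⟩ := rep' _ (mem_sp_two a b)
      have hcard : Fintype.card (Fin 3) = Module.finrank F A := by simp [h3]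
      have indep : ∀ x : A, x ∉ U → LinearIndependent F ![x, b, c'] := by
        intro x hx
        rw [Fintype.linearIndependent_iff]
        intro g hg
        rw [Fin.sum_univ_three] at hg
        simp only [Matrix.cons_val_zero, Matrix.cons_val_one, Matrix.head_cons,
          Matrix.cons_val_two, Matrix.tail_cons] at hg
        have h0 : g 0 = 0 := by
          by_contra h00
          apply hx
          rw [add_assoc] at hg
          have e : g 0 • x = -(g 1 • b + g 2 • c') := eq_neg_of_add_eq_zero_left hg
          have e' : x = (g 0)⁻¹ • -(g 1 • b + g 2 • c') := by
            rw [← e, inv_smul_smul₀ h00]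
          rw [e']
          refine Submodule.smul_mem _ _ (neg_mem (add_mem ?_ ?_)) <;>
            exact Submodule.smul_mem _ _ (Submodule.subset_span (by simp))
        have h1 : g 1 = 0 := by
          have e2 : b * (g 0 • x + g 1 • b + g 2 • c') = 0 := by rw [hg, mul_zero]
          rw [h0, zero_smul, zero_add, mul_add, mul_smul_comm, mul_smul_comm, hbb, annL',
            smul_zero, add_zero] at e2
          exact (smul_eq_zero.mp e2).resolve_right hc'0
        have h2 : g 2 = 0 := by
          rw [h0, h1, zero_smul, zero_smul, zero_add, zero_add] at hg
          exact (smul_eq_zero.mp hg).resolve_right hc'0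
        intro i; fin_cases i <;> assumption
      rcases eq_or_ne γ 0 with hγ0 | hγ0
      · have hab : a * b = 0 := by rw [hγ, hγ0, zero_smul]
        rcases eq_or_ne α 0 with hα0 | hα0
        · -- A_{3,2} with basis (b, c', a)
          have haa : a * a = 0 := by rw [hα, hα0, zero_smul]
          have hli : LinearIndependent F ![b, c', a] := by
            have h5 := (indep a haU).comp ![1, 2, 0] (by decide)
            have he : (![a, b, c'] ∘ ![(1 : Fin 3), 2, 0]) = ![b, c', a] := by
              ext i; fin_cases i <;> rfl
            rwa [he] at h5
          refine ⟨basisOfLinearIndependentOfCardEqFinrank hli hcard,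
            Or.inr <| Or.inl ?_⟩
          have hv : ⇑(basisOfLinearIndependentOfCardEqFinrank hli hcard) = ![b, c', a] :=
            coe_basisOfLinearIndependentOfCardEqFinrank hli hcard
          unfold IsA32Basis
          rw [hv]
          simp only [Matrix.cons_val_zero, Matrix.cons_val_one, Matrix.head_cons,
            Matrix.cons_val_two, Matrix.tail_cons]
          exact ⟨hbb, annL' b, annR' b, hba, hab, annR' c', annR' a, annL' a, haa⟩
        · -- A_{3,3}^α with basis (a, b, c')
          have hli : LinearIndependent F ![a, b, c'] := indep a haU
          refine ⟨basisOfLinearIndependentOfCardEqFinrank hli hcard,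
            Or.inr <| Or.inr <| Or.inl ⟨α, hα0, ?_⟩⟩
          have hv : ⇑(basisOfLinearIndependentOfCardEqFinrank hli hcard) = ![a, b, c'] :=
            coe_basisOfLinearIndependentOfCardEqFinrank hli hcard
          unfold IsA33Basis
          rw [hv]
          simp only [Matrix.cons_val_zero, Matrix.cons_val_one, Matrix.head_cons,
            Matrix.cons_val_two, Matrix.tail_cons]
          exact ⟨hα, hbb, hab, hba, annL' a, annR' a, annL' b, annR' b, annR' c'⟩
      · -- A_{3,4} with basis (γ⁻¹ • a, b, c')
        set a' := γ⁻¹ • a with ha'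
        have haU' : a' ∉ U := by
          intro h
          apply haU
          have h5 := Submodule.smul_mem U γ h
          rwa [ha', smul_smul, mul_inv_cancel₀ hγ0, one_smul] at h5
        have ha'b : a' * b = c' := by
          rw [ha', smul_mul_assoc, hγ, smul_smul, inv_mul_cancel₀ hγ0, one_smul]
        have hba' : b * a' = 0 := by rw [ha', mul_smul_comm, hba, smul_zero]
        have ha'a' : a' * a' = (γ⁻¹ * γ⁻¹ * α) • c' := by
          rw [ha', smul_mul_assoc, mul_smul_comm, hα, smul_smul, smul_smul, mul_assoc]
        have hli : LinearIndependent F ![a', b, c'] := indep a' haU'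
        refine ⟨basisOfLinearIndependentOfCardEqFinrank hli hcard,
          Or.inr <| Or.inr <| Or.inr <| Or.inl ⟨γ⁻¹ * γ⁻¹ * α, ?_⟩⟩
        have hv : ⇑(basisOfLinearIndependentOfCardEqFinrank hli hcard) = ![a', b, c'] :=
          coe_basisOfLinearIndependentOfCardEqFinrank hli hcard
        unfold IsA34Basis
        rw [hv]
        simp only [Matrix.cons_val_zero, Matrix.cons_val_one, Matrix.head_cons,
          Matrix.cons_val_two, Matrix.tail_cons]
        exact ⟨ha'a', ha'b, hbb, hba', annL' a', annR' a', annL' b, annR' b, annR' c'⟩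

  · -- dim A² = 2 : A_{3,6}
    have hne : Sp F (A := A) 2 ≠ ⊤ := hne2
    obtain ⟨a, ha⟩ : ∃ a : A, a ∉ Sp F (A := A) 2 := by
      by_contra h
      push_neg at h
      exact hne (Submodule.eq_top_iff'.mpr h)
    have hinf : Submodule.span F {a} ⊓ Sp F (A := A) 2 = ⊥ := by
      rw [eq_bot_iff]
      intro x hx
      rw [Submodule.mem_inf] at hx
      obtain ⟨hx1, hx2⟩ := hx
      rw [Submodule.mem_span_singleton] at hx1
      obtain ⟨t, rfl⟩ := hx1
      rcases eq_or_ne t 0 with rfl | ht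
      · simp
      · have hmem : a ∈ Sp F (A := A) 2 := by
          have h5 := Submodule.smul_mem _ t⁻¹ hx2
          rwa [smul_smul, inv_mul_cancel₀ ht, one_smul] at h5
        exact (ha hmem).elim
    have hsup : Submodule.span F {a} ⊔ Sp F (A := A) 2 = ⊤ := by
      apply Submodule.eq_top_of_finrank_eq
      have h0 := Submodule.finrank_sup_add_finrank_inf_eq (Submodule.span F {a}) (Sp F (A := A) 2)
      have ha0 : a ≠ 0 := by rintro rfl; exact ha (Submodule.zero_mem _)
      rw [hinf, finrank_span_singleton ha0, hd, finrank_bot] at h0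
      rw [h3]
      omega
    have decomp : ∀ x : A, ∃ (t : F) (w : A), w ∈ Sp F (A := A) 2 ∧ x = t • a + w := by
      intro x
      have hx : x ∈ Submodule.span F {a} ⊔ Sp F (A := A) 2 := by rw [hsup]; trivial
      rw [Submodule.mem_sup] at hx
      obtain ⟨y, hy, z, hz, hyz⟩ := hx
      rw [Submodule.mem_span_singleton] at hy
      obtain ⟨t, rfl⟩ := hy
      exact ⟨t, z, hz, hyz.symm⟩
    have c2 : Sp F (A := A) 2 ≤ Submodule.span F {a * a} ⊔ Sp F (A := A) 3 := by
      rw [show Sp F (A := A) 2 = _ from rfl, Sp, Submodule.span_le]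
      rintro z ⟨x, l, hl, rfl⟩
      obtain ⟨y, rfl⟩ := List.length_eq_one_iff.mp (by omega : l.length = 1)
      · simp only [List.foldl]
        obtain ⟨s, w, hw, rfl⟩ := decomp x
        obtain ⟨t, u, hu, rfl⟩ := decomp y
        have e : (s • a + w) * (t • a + u) =
            (s * t) • (a * a) + (s • (a * u) + (t • (w * a) + w * u)) := by
          rw [add_mul, mul_add, mul_add, smul_mul_assoc, smul_mul_assoc, mul_smul_comm,
            mul_smul_comm, smul_smul]
          abel
        rw [e]
        have m1 : a * u ∈ Sp F (A := A) 3 := by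
          have h5 := mul_mem_sp (mem_sp_one (F := F) a) hu
          rwa [show (1 + 2 : ℕ) = 3 from rfl] at h5
        have m2 : w * a ∈ Sp F (A := A) 3 := by
          have h5 := mul_mem_sp hw (mem_sp_one (F := F) a)
          rwa [show (2 + 1 : ℕ) = 3 from rfl] at h5
        have m3 : w * u ∈ Sp F (A := A) 3 := by
          have h5 := mul_mem_sp hw hu
          rw [show (2 + 2 : ℕ) = 4 from rfl] at h5
          exact sp_succ_le 2 h5
        refine add_mem (Submodule.mem_sup_left (Submodule.smul_mem _ _
          (Submodule.mem_span_singleton_self _))) (Submodule.mem_sup_right ?_)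
        exact add_mem (Submodule.smul_mem _ _ m1)
          (add_mem (Submodule.smul_mem _ _ m2) m3)
    have c3 : Sp F (A := A) 3 ≤ Submodule.span F {(a * a) * a} := by
      rw [show Sp F (A := A) 3 = _ from rfl, Sp, Submodule.span_le]
      rintro z ⟨x, l, hl, rfl⟩
      obtain ⟨y, z0, rfl⟩ := List.length_eq_two.mp (by omega : l.length = 2)
      · simp only [List.foldl]
        obtain ⟨s, p, hp, hxy⟩ : ∃ (s : F) (p : A), p ∈ Sp F (A := A) 3 ∧
            x * y = s • (a * a) + p := by
          have := c2 (mem_sp_two x y)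
          rw [Submodule.mem_sup] at this
          obtain ⟨u, hu, p, hp, hup⟩ := this
          rw [Submodule.mem_span_singleton] at hu
          obtain ⟨s, rfl⟩ := hu
          exact ⟨s, p, hp, hup.symm⟩
        obtain ⟨t, u, hu, rfl⟩ := decomp z0
        have z1 : (a * a) * u = 0 := by
          have := mul_mem_sp (mem_sp_two (F := F) a a) hu
          rw [show (2 + 2 : ℕ) = 4 from rfl, hSp4, Submodule.mem_bot] at this
          exact this
        have z2 : p * a = 0 := by
          have := mul_mem_sp hp (mem_sp_one (F := F) a)
          rw [show (3 + 1 : ℕ) = 4 from rfl, hSp4, Submodule.mem_bot] at this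
          exact this
        have z3 : p * u = 0 := by
          have := mul_mem_sp hp hu
          have h5 := sp_le_sp (show 4 ≤ 3 + 2 by norm_num) (by norm_num) this
          rw [hSp4, Submodule.mem_bot] at h5
          exact h5
        rw [hxy]
        have e : (s • (a * a) + p) * (t • a + u)
            = (s * t) • ((a * a) * a) + (s • ((a * a) * u) + (t • (p * a) + p * u)) := by
          rw [add_mul, mul_add, mul_add, smul_mul_assoc, smul_mul_assoc, mul_smul_comm,
            mul_smul_comm, smul_smul]
          abel
        rw [e, z1, z2, z3, smul_zero, smul_zero, add_zero, add_zero, add_zero]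
        exact Submodule.smul_mem _ _ (Submodule.mem_span_singleton_self _)
    have htop : ⊤ ≤ Submodule.span F (Set.range ![a, a * a, (a * a) * a]) := by
      intro x _
      obtain ⟨t, w, hw, rfl⟩ := decomp x
      obtain ⟨s, p, hp, rfl⟩ : ∃ (s : F) (p : A), p ∈ Sp F (A := A) 3 ∧
          w = s • (a * a) + p := by
        have := c2 hw
        rw [Submodule.mem_sup] at this
        obtain ⟨u, hu, p, hp, hup⟩ := this
        rw [Submodule.mem_span_singleton] at hu
        obtain ⟨s, rfl⟩ := hu
        exact ⟨s, p, hp, hup.symm⟩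
      obtain ⟨r, hr⟩ : ∃ r : F, p = r • ((a * a) * a) := by
        have := c3 hp
        rw [Submodule.mem_span_singleton] at this
        obtain ⟨r, hr⟩ := this
        exact ⟨r, hr.symm⟩
      subst hr
      refine add_mem (Submodule.smul_mem _ _ (Submodule.subset_span ⟨0, rfl⟩))
        (add_mem (Submodule.smul_mem _ _ (Submodule.subset_span ⟨1, rfl⟩))
          (Submodule.smul_mem _ _ (Submodule.subset_span ⟨2, rfl⟩)))
    have hcard : Fintype.card (Fin 3) = Module.finrank F A := by simp [h3]
    refine ⟨basisOfTopLeSpanOfCardEqFinrank _ htop hcard,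
      Or.inr <| Or.inr <| Or.inr <| Or.inr <| Or.inr ?_⟩
    have hv : ⇑(basisOfTopLeSpanOfCardEqFinrank _ htop hcard) = ![a, a * a, (a * a) * a] :=
      coe_basisOfTopLeSpanOfCardEqFinrank _ _ _
    unfold IsA36Basis
    rw [hv]
    have hq : a * a * a * a = 0 := q4 a a a a
    refine ⟨?_, ?_, ?_, ?_, ?_, ?_, ?_, ?_, ?_⟩ <;>
      simp only [Matrix.cons_val_zero, Matrix.cons_val_one, Matrix.head_cons,
        Matrix.cons_val_two, Matrix.tail_cons, ← mul_assoc] <;>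
      first
        | rfl
        | exact hq
        | (rw [hq]; simp)
end

section
/- Let F be a finite field of characteristic 2. Then for every α ∈ F the 4-dimensional commutative non-unital associative F-algebra A_{4,5}^α with basis a, b, c, d and nonzero products a² = αc, ab = ba = d, b² = c is isomorphic to A_{4,5}^0. More generally, A_{4,5}^α ≅ A_{4,5}^β if and only if there exist u, v, x, y ∈ F with uy + vx ≠ 0 and α·(x²β + u²) = y²β + v². -/
/-- The multiplication table of `A_{4,5}^α` (characteristic 2 form) on a basis
`a = v 0`, `b = v 1`, `c = v 2`, `d = v 3`: `a² = αc`, `ab = ba = d`, `b² = c`,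
all other products of basis elements zero. -/
def IsA45Basis {F A : Type*} [Field F] [NonUnitalRing A] [Module F A]
    (α : F) (v : Module.Basis (Fin 4) F A) : Prop :=
  v 0 * v 0 = α • v 2 ∧ v 0 * v 1 = v 3 ∧ v 1 * v 0 = v 3 ∧ v 1 * v 1 = v 2 ∧
  v 0 * v 2 = 0 ∧ v 0 * v 3 = 0 ∧ v 1 * v 2 = 0 ∧ v 1 * v 3 = 0 ∧
  v 2 * v 0 = 0 ∧ v 2 * v 1 = 0 ∧ v 2 * v 2 = 0 ∧ v 2 * v 3 = 0 ∧
  v 3 * v 0 = 0 ∧ v 3 * v 1 = 0 ∧ v 3 * v 2 = 0 ∧ v 3 * v 3 = 0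

/-- Over a finite field of characteristic 2: `A_{4,5}^α ≅ A_{4,5}^β` iff there are
`u, v, x, y ∈ F` with `uy + vx ≠ 0` and `α(x²β + u²) = y²β + v²`; in particular every
`A_{4,5}^α` is isomorphic to `A_{4,5}^0`. -/
theorem stmt18 {F : Type} [Field F] [Fintype F] (hchar : ringChar F = 2)
    {A B : Type*}
    [NonUnitalRing A] [Module F A] [SMulCommClass F A A] [IsScalarTower F A A]
    [NonUnitalRing B] [Module F B] [SMulCommClass F B B] [IsScalarTower F B B]
    (α β : F)
    (v : Module.Basis (Fin 4) F A) (w : Module.Basis (Fin 4) F B)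
    (hv : IsA45Basis α v) (hw : IsA45Basis β w) :
    ((∃ e : A ≃ₗ[F] B, ∀ x y : A, e (x * y) = e x * e y) ↔
        ∃ u t x y : F, u * y + t * x ≠ 0 ∧
          α * (x ^ 2 * β + u ^ 2) = y ^ 2 * β + t ^ 2) ∧
    (β = 0 → ∃ e : A ≃ₗ[F] B, ∀ x y : A, e (x * y) = e x * e y) := by
  obtain ⟨hv00, hv01, hv10, hv11, hv02, hv03, hv12, hv13,
    hv20, hv21, hv22, hv23, hv30, hv31, hv32, hv33⟩ := hv
  obtain ⟨hw00, hw01, hw10, hw11, hw02, hw03, hw12, hw13,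
    hw20, hw21, hw22, hw23, hw30, hw31, hw32, hw33⟩ := hw
  have h2 : (2 : F) = 0 := by
    rw [show (2 : F) = ((2 : ℕ) : F) by norm_num, ← hchar, ringChar.Nat.cast_ringChar]
  have hsq : ∀ z : F, ∃ g : F, g ^ 2 = z := by
    have hinj : Function.Injective fun x : F => x ^ 2 := by
      intro x y hxy
      simp only at hxy
      have h0 : (x - y) ^ 2 = 0 := by linear_combination hxy - x * y * h2 + y ^ 2 * h2
      have := pow_eq_zero_iff (two_ne_zero) |>.mp h0
      exact sub_eq_zero.mp this
    intro z
    exact Finite.injective_iff_surjective.mp hinj z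
  obtain ⟨γ, hγ⟩ := hsq (β - α)
  obtain ⟨t0, ht0⟩ := hsq (α - β)
  set f : Fin 4 → B := ![w 0 + γ • w 1, w 1, w 2, w 3 + γ • w 2] with hf
  set g : Fin 4 → A := ![v 0 + γ • v 1, v 1, v 2, v 3 + γ • v 2] with hg
  set φ := v.constr (M' := B) F f with hφdef
  set ψ := w.constr (M' := A) F g with hψdef
  have hcomp1 : φ.comp ψ = LinearMap.id := by
    apply w.ext; intro i
    fin_cases i <;>
      simp [hφdef, hψdef, hf, hg, Module.Basis.constr_basis, map_add, map_smul] <;>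
      match_scalars <;> first | ring1 | linear_combination γ * h2
  have hcomp2 : ψ.comp φ = LinearMap.id := by
    apply v.ext; intro i
    fin_cases i <;>
      simp [hφdef, hψdef, hf, hg, Module.Basis.constr_basis, map_add, map_smul] <;>
      match_scalars <;> first | ring1 | linear_combination γ * h2
  have key : (LinearMap.mul F A).compr₂ φ = (LinearMap.mul F B).compl₁₂ φ φ := by
    apply v.ext; intro i
    apply v.ext; intro j
    fin_cases i <;> fin_cases j <;>
      simp [hφdef, hf, Module.Basis.constr_basis, map_add, map_smul,
        hv00, hv01, hv10, hv11, hv02, hv03, hv12, hv13,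
        hv20, hv21, hv22, hv23, hv30, hv31, hv32, hv33,
        hw00, hw01, hw10, hw11, hw02, hw03, hw12, hw13,
        hw20, hw21, hw22, hw23, hw30, hw31, hw32, hw33,
        mul_add, add_mul, smul_mul_assoc, mul_smul_comm, smul_smul] <;>
      match_scalars <;>
      (try ring1) <;> (try linear_combination γ * h2) <;>
      (try linear_combination (α - β) * h2 - hγ) <;>
      (try linear_combination (α - β) * h2 + hγ) <;>
      (try linear_combination hγ - 2 * γ * h2) <;>
      (try linear_combination -hγ - 2 * γ * h2) <;>
      (try linear_combination hγ + 2 * γ * h2) <;>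
      (try linear_combination -hγ + 2 * γ * h2) <;>
      (try linear_combination hγ) <;> (try linear_combination -hγ) <;>
      (try linear_combination hγ - γ * h2) <;> (try linear_combination -hγ - γ * h2) <;>
      (try linear_combination hγ + γ * h2) <;> (try linear_combination -hγ + γ * h2) <;>
      (try linear_combination 2 * γ * h2) <;> (try linear_combination γ ^ 2 * h2) <;>
      (try linear_combination -γ * h2) <;> (try linear_combination -(2 * γ) * h2)
  set e : A ≃ₗ[F] B := LinearEquiv.ofLinear φ ψ hcomp1 hcomp2 with hedef
  have hmul : ∀ x y : A, e (x * y) = e x * e y := by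
    intro x y
    have := LinearMap.congr_fun (LinearMap.congr_fun key x) y
    simpa [hedef] using this
  refine ⟨⟨fun _ => ⟨1, t0, 0, 1, by simp, by linear_combination -ht0⟩,
    fun _ => ⟨e, hmul⟩⟩, fun _ => ⟨e, hmul⟩⟩
end
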